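/- In a fibration category, if f : a → b is a weak equivalence between cofibrant objects, then f is a homotopy equivalence; conversely, if f is a homotopy equivalence between cofibrant objects, then f is a weak equivalence. -/

import Mathlib

open CategoryTheory CategoryTheory.Limits

universe v u

namespace Paper

variable {C : Type u} [Category.{v} C]

/-- A fibration category structure on a category `C`. -/
structure FibCatStruct (C : Type u) [Category.{v} C] where
  /-- weak equivalences -/
  Weq : MorphismProperty C
  /-- fibrations -/
  Fib : MorphismProperty C
  weq_id : ∀ x : C, Weq (𝟙 x)
  weq_comp : ∀ {x y z : C} (f : x ⟶ y) (g : y ⟶ z), Weq f → Weq g → Weq (f ≫ g)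
  fib_id : ∀ x : C, Fib (𝟙 x)
  fib_comp : ∀ {x y z : C} (f : x ⟶ y) (g : y ⟶ z), Fib f → Fib g → Fib (f ≫ g)
  /-- (F1): terminal object, all objects fibrant -/
  term : C
  isTerminal : IsTerminal term
  all_fibrant : ∀ x : C, Fib (isTerminal.from x)
  /-- (F2): pullbacks along fibrations exist -/
  pullback_exists : ∀ {x y z : C} (f : x ⟶ z) (g : y ⟶ z), Fib g → HasPullback f g
  fib_stable : ∀ {p x y z : C} {fst : p ⟶ x} {snd : p ⟶ y} {f : x ⟶ z} {g : y ⟶ z},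
    IsPullback fst snd f g → Fib g → Fib fst
  acyclic_fib_stable : ∀ {p x y z : C} {fst : p ⟶ x} {snd : p ⟶ y} {f : x ⟶ z} {g : y ⟶ z},
    IsPullback fst snd f g → Fib g → Weq g → Weq fst
  /-- (F3): factorization as weak equivalence followed by fibration -/
  factor : ∀ {x y : C} (f : x ⟶ y), ∃ (z : C) (i : x ⟶ z) (q : z ⟶ y),
    Weq i ∧ Fib q ∧ i ≫ q = f
  /-- (F4): 2-out-of-6 for weak equivalences -/
  two_out_of_six : ∀ {a b c d : C} (f : a ⟶ b) (g : b ⟶ c) (h : c ⟶ d),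
    Weq (f ≫ g) → Weq (g ≫ h) → Weq f ∧ Weq g ∧ Weq h ∧ Weq (f ≫ g ≫ h)

variable (F : FibCatStruct C)

/-- A path object for `x`: a factorization of the diagonal `x → x × x` as a
weak equivalence followed by a fibration (the product is given by an explicit
binary product cone). -/
structure FibPathObject (F : FibCatStruct C) (x : C) where
  P : C
  σ : x ⟶ P
  π₀ : P ⟶ x
  π₁ : P ⟶ x
  σ_weq : F.Weq σ
  σ_π₀ : σ ≫ π₀ = 𝟙 x
  σ_π₁ : σ ≫ π₁ = 𝟙 x
  prod : C
  p₀ : prod ⟶ x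
  p₁ : prod ⟶ x
  isProd : IsLimit (BinaryFan.mk p₀ p₁)
  π : P ⟶ prod
  π_p₀ : π ≫ p₀ = π₀
  π_p₁ : π ≫ p₁ = π₁
  π_fib : F.Fib π

/-- `f` and `g` are homotopic if there is a homotopy `H` into some path object. -/
def FibHomotopic (F : FibCatStruct C) {x y : C} (f g : x ⟶ y) : Prop :=
  ∃ (Po : FibPathObject F y) (H : x ⟶ Po.P), H ≫ Po.π₀ = f ∧ H ≫ Po.π₁ = g

/-- `f` is a homotopy equivalence if it admits an inverse up to homotopy. -/
def FibHtpyEquiv (F : FibCatStruct C) {x y : C} (f : x ⟶ y) : Prop :=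
  ∃ g : y ⟶ x, FibHomotopic F (f ≫ g) (𝟙 x) ∧ FibHomotopic F (g ≫ f) (𝟙 y)

/-- An object `a` is cofibrant if every acyclic fibration admits lifts against
morphisms from `a`. -/
def Cofibrant (F : FibCatStruct C) (a : C) : Prop :=
  ∀ {x y : C} (p : x ⟶ y), F.Fib p → F.Weq p → ∀ f : a ⟶ y, ∃ g : a ⟶ x, g ≫ p = f

end Paper

namespace PaperAux

open Paper

variable {C : Type u} [Category.{v} C] (F : FibCatStruct C)

/-- 2-out-of-3, left cancellation: if `f ≫ g` and `g` are weqs, so is `f`. -/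
theorem weq_cancel_left {x y z : C} {f : x ⟶ y} {g : y ⟶ z}
    (hfg : F.Weq (f ≫ g)) (hg : F.Weq g) : F.Weq f :=
  (F.two_out_of_six f g (𝟙 z) hfg (by simpa using hg)).1

/-- 2-out-of-3, right cancellation: if `f` and `f ≫ g` are weqs, so is `g`. -/
theorem weq_cancel_right {x y z : C} {f : x ⟶ y} {g : y ⟶ z}
    (hf : F.Weq f) (hfg : F.Weq (f ≫ g)) : F.Weq g :=
  (F.two_out_of_six (𝟙 x) f g (by simpa using hf) hfg).2.2.1

theorem pathObject_π₀_weq {x : C} (Po : FibPathObject F x) : F.Weq Po.π₀ :=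
  weq_cancel_right F Po.σ_weq (by rw [Po.σ_π₀]; exact F.weq_id x)

theorem pathObject_π₁_weq {x : C} (Po : FibPathObject F x) : F.Weq Po.π₁ :=
  weq_cancel_right F Po.σ_weq (by rw [Po.σ_π₁]; exact F.weq_id x)

/-- Path objects exist for every object. -/
theorem exists_pathObject (x : C) : Nonempty (FibPathObject F x) := by
  haveI : HasPullback (F.isTerminal.from x) (F.isTerminal.from x) :=
    F.pullback_exists _ _ (F.all_fibrant x)
  let pr0 := pullback.fst (F.isTerminal.from x) (F.isTerminal.from x)
  let pr1 := pullback.snd (F.isTerminal.from x) (F.isTerminal.from x)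
  have isProd : IsLimit (BinaryFan.mk pr0 pr1) := by
    apply isProductOfIsTerminalIsPullback _ _ _ _ F.isTerminal
    exact pullbackIsPullback _ _
  obtain ⟨P, σ, πm, hσ, hπ, hfac⟩ :=
    F.factor (pullback.lift (𝟙 x) (𝟙 x) rfl :
      x ⟶ pullback (F.isTerminal.from x) (F.isTerminal.from x))
  refine ⟨{
    P := P, σ := σ, π₀ := πm ≫ pr0, π₁ := πm ≫ pr1
    σ_weq := hσ
    σ_π₀ := by rw [← Category.assoc, hfac]; exact pullback.lift_fst _ _ _
    σ_π₁ := by rw [← Category.assoc, hfac]; exact pullback.lift_snd _ _ _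
    prod := _, p₀ := pr0, p₁ := pr1, isProd := isProd
    π := πm, π_p₀ := rfl, π_p₁ := rfl, π_fib := hπ }⟩

/-- The key lifting lemma: if `p : E ⟶ B` is an acyclic fibration, `w` is
cofibrant, and `u, v : w ⟶ E` satisfy `u ≫ p = v ≫ p`, then for any
`k : E ⟶ Z` the maps `u ≫ k` and `v ≫ k` are homotopic. -/
theorem key {w E B Z : C} (hw : Cofibrant F w) (p : E ⟶ B) (hpf : F.Fib p) (hpw : F.Weq p)
    (u v : w ⟶ E) (huv : u ≫ p = v ≫ p) (k : E ⟶ Z) :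
    FibHomotopic F (u ≫ k) (v ≫ k) := by
  obtain ⟨PZ⟩ := exists_pathObject F Z
  haveI : HasPullback p p := F.pullback_exists p p hpf
  set d1 : pullback p p ⟶ E := pullback.fst p p with hd1
  set d2 : pullback p p ⟶ E := pullback.snd p p with hd2
  have hD : IsPullback d1 d2 p p := IsPullback.of_hasPullback p p
  have hd1w : F.Weq d1 := F.acyclic_fib_stable hD hpf hpw
  set δ : E ⟶ pullback p p := pullback.lift (𝟙 E) (𝟙 E) rfl with hδdef
  have hδ1 : δ ≫ d1 = 𝟙 E := pullback.lift_fst _ _ _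
  have hδ2 : δ ≫ d2 = 𝟙 E := pullback.lift_snd _ _ _
  have hδw : F.Weq δ := weq_cancel_left F (by rw [hδ1]; exact F.weq_id E) hd1w
  -- the map to the product of Z with itself
  obtain ⟨m, hm0, hm1⟩ := BinaryFan.IsLimit.lift' PZ.isProd (d1 ≫ k) (d2 ≫ k)
  simp only [BinaryFan.mk_fst, BinaryFan.mk_snd, BinaryFan.mk_pt, pair_obj_left, pair_obj_right] at hm0 hm1
  haveI : HasPullback m PZ.π := F.pullback_exists m PZ.π PZ.π_fib
  set qD : pullback m PZ.π ⟶ pullback p p := pullback.fst m PZ.π with hqD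
  set qP : pullback m PZ.π ⟶ PZ.P := pullback.snd m PZ.π with hqP
  have hQ : IsPullback qD qP m PZ.π := IsPullback.of_hasPullback m PZ.π
  have hqDfib : F.Fib qD := F.fib_stable hQ PZ.π_fib
  have hcomm : δ ≫ m = (k ≫ PZ.σ) ≫ PZ.π := by
    apply BinaryFan.IsLimit.hom_ext PZ.isProd <;>
      simp only [BinaryFan.mk_fst, BinaryFan.mk_snd, BinaryFan.mk_pt, pair_obj_left, pair_obj_right, Category.assoc]
    · rw [hm0, PZ.π_p₀, ← Category.assoc, hδ1, Category.id_comp, PZ.σ_π₀, Category.comp_id]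
    · rw [hm1, PZ.π_p₁, ← Category.assoc, hδ2, Category.id_comp, PZ.σ_π₁, Category.comp_id]
  set e : E ⟶ pullback m PZ.π := pullback.lift δ (k ≫ PZ.σ) hcomm with hedef
  obtain ⟨N, ι, ρ, hι, hρ, hfac⟩ := F.factor e
  have hρ'fib : F.Fib (ρ ≫ qD) := F.fib_comp _ _ hρ hqDfib
  have heqD : e ≫ qD = δ := pullback.lift_fst _ _ _
  have hρ'weq : F.Weq (ρ ≫ qD) := by
    refine weq_cancel_right F hι ?_
    rw [← Category.assoc, hfac, heqD]; exact hδw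
  obtain ⟨G, hG⟩ := hw (ρ ≫ qD) hρ'fib hρ'weq (pullback.lift u v huv)
  refine ⟨PZ, G ≫ ρ ≫ qP, ?_, ?_⟩
  · have h1 : qP ≫ PZ.π₀ = qD ≫ m ≫ PZ.p₀ := by
      rw [← PZ.π_p₀, ← Category.assoc, ← pullback.condition, Category.assoc]
    calc (G ≫ ρ ≫ qP) ≫ PZ.π₀ = G ≫ ρ ≫ qP ≫ PZ.π₀ := by simp only [Category.assoc]
      _ = G ≫ ρ ≫ qD ≫ m ≫ PZ.p₀ := by rw [h1]
      _ = (G ≫ (ρ ≫ qD)) ≫ d1 ≫ k := by rw [hm0]; simp only [Category.assoc]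
      _ = u ≫ k := by rw [hG, ← Category.assoc, pullback.lift_fst]
  · have h1 : qP ≫ PZ.π₁ = qD ≫ m ≫ PZ.p₁ := by
      rw [← PZ.π_p₁, ← Category.assoc, ← pullback.condition, Category.assoc]
    calc (G ≫ ρ ≫ qP) ≫ PZ.π₁ = G ≫ ρ ≫ qP ≫ PZ.π₁ := by simp only [Category.assoc]
      _ = G ≫ ρ ≫ qD ≫ m ≫ PZ.p₁ := by rw [h1]
      _ = (G ≫ (ρ ≫ qD)) ≫ d2 ≫ k := by rw [hm1]; simp only [Category.assoc]
      _ = v ≫ k := by rw [hG, ← Category.assoc, pullback.lift_snd]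

end PaperAux

open Paper in
/-- In a fibration category, a morphism between cofibrant objects
is a weak equivalence iff it is a homotopy equivalence. -/
theorem weq_iff_htpyEquiv_of_cofibrant {C : Type u} [Category.{v} C]
    (F : Paper.FibCatStruct C) {a b : C} (ha : Cofibrant F a) (hb : Cofibrant F b)
    (f : a ⟶ b) :
    F.Weq f ↔ FibHtpyEquiv F f := by
  constructor
  · intro hf
    obtain ⟨Pb⟩ := PaperAux.exists_pathObject F b
    -- the product projections of every path object are (acyclic) fibrations
    have hp₀fib : F.Fib Pb.p₀ :=
      F.fib_stable (IsPullback.of_is_product' Pb.isProd F.isTerminal) (F.all_fibrant b)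
    have hπ₀fib : F.Fib Pb.π₀ := by rw [← Pb.π_p₀]; exact F.fib_comp _ _ Pb.π_fib hp₀fib
    have hπ₀weq : F.Weq Pb.π₀ := PaperAux.pathObject_π₀_weq F Pb
    -- Brown factorization: c = a ×_b Pb
    haveI : HasPullback f Pb.π₀ := F.pullback_exists f Pb.π₀ hπ₀fib
    set r : pullback f Pb.π₀ ⟶ a := pullback.fst f Pb.π₀ with hrdef
    set t : pullback f Pb.π₀ ⟶ Pb.P := pullback.snd f Pb.π₀ with htdef
    have hc : IsPullback r t f Pb.π₀ := IsPullback.of_hasPullback f Pb.π₀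
    have hrfib : F.Fib r := F.fib_stable hc hπ₀fib
    have hrweq : F.Weq r := F.acyclic_fib_stable hc hπ₀fib hπ₀weq
    have hjcond : (𝟙 a) ≫ f = (f ≫ Pb.σ) ≫ Pb.π₀ := by
      rw [Category.id_comp, Category.assoc, Pb.σ_π₀, Category.comp_id]
    set j : a ⟶ pullback f Pb.π₀ := pullback.lift (𝟙 a) (f ≫ Pb.σ) hjcond with hjdef
    have hjr : j ≫ r = 𝟙 a := pullback.lift_fst _ _ _
    have hjt : j ≫ t = f ≫ Pb.σ := pullback.lift_snd _ _ _
    have hjweq : F.Weq j := PaperAux.weq_cancel_left F (by rw [hjr]; exact F.weq_id a) hrweq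
    set q : pullback f Pb.π₀ ⟶ b := t ≫ Pb.π₁ with hqdef
    have hjq : j ≫ q = f := by
      rw [hqdef, ← Category.assoc, hjt, Category.assoc, Pb.σ_π₁, Category.comp_id]
    have hqweq : F.Weq q := PaperAux.weq_cancel_right F hjweq (by rw [hjq]; exact hf)
    -- the fibration property of q, via the product a × b
    haveI : HasPullback (F.isTerminal.from a) (F.isTerminal.from b) :=
      F.pullback_exists _ _ (F.all_fibrant b)
    set pa : pullback (F.isTerminal.from a) (F.isTerminal.from b) ⟶ a :=
      pullback.fst _ _ with hpadef
    set pb : pullback (F.isTerminal.from a) (F.isTerminal.from b) ⟶ b :=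
      pullback.snd _ _ with hpbdef
    have hab : IsPullback pa pb (F.isTerminal.from a) (F.isTerminal.from b) :=
      IsPullback.of_hasPullback _ _
    have hpbfib : F.Fib pb := F.fib_stable hab.flip (F.all_fibrant a)
    set φ : pullback f Pb.π₀ ⟶ pullback (F.isTerminal.from a) (F.isTerminal.from b) :=
      pullback.lift r q (F.isTerminal.hom_ext _ _) with hφdef
    have hφa : φ ≫ pa = r := pullback.lift_fst _ _ _
    have hφb : φ ≫ pb = q := pullback.lift_snd _ _ _
    obtain ⟨ψ, hψ0, hψ1⟩ := BinaryFan.IsLimit.lift' Pb.isProd (pa ≫ f) pb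
    simp only [BinaryFan.mk_fst, BinaryFan.mk_snd, BinaryFan.mk_pt, pair_obj_left, pair_obj_right] at hψ0 hψ1
    have hsq : φ ≫ ψ = t ≫ Pb.π := by
      apply BinaryFan.IsLimit.hom_ext Pb.isProd <;>
        simp only [BinaryFan.mk_fst, BinaryFan.mk_snd, BinaryFan.mk_pt, pair_obj_left, pair_obj_right, Category.assoc]
      · rw [hψ0, Pb.π_p₀, ← Category.assoc, hφa]; exact pullback.condition
      · rw [hψ1, Pb.π_p₁, hφb]
    have hφfib : F.Fib φ := by
      refine F.fib_stable (snd := t) (f := ψ) (g := Pb.π) ?_ Pb.π_fib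
      refine IsPullback.of_isLimit' ⟨hsq⟩ ?_
      refine PullbackCone.isLimitAux' _ (fun s => ?_)
      have hscond : (s.fst ≫ pa) ≫ f = s.snd ≫ Pb.π₀ := by
        rw [Category.assoc, ← hψ0, ← Category.assoc, s.condition, Category.assoc, Pb.π_p₀]
      refine ⟨pullback.lift (s.fst ≫ pa) s.snd hscond, ?_, ?_, ?_⟩
      · apply hab.hom_ext
        · simp only [CommSq.cone_fst, Category.assoc]
          erw [Category.assoc, hφa]; exact pullback.lift_fst _ _ _
        · simp only [CommSq.cone_fst, Category.assoc]
          erw [Category.assoc, hφb, hqdef, ← Category.assoc]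
          have hlt : pullback.lift (s.fst ≫ pa) s.snd hscond ≫ t = s.snd :=
            pullback.lift_snd _ _ _
          erw [hlt, ← hψ1, ← Category.assoc, s.condition, Category.assoc, Pb.π_p₁]
      · rw [CommSq.cone_snd]; exact pullback.lift_snd _ _ _
      · intro mm h1 h2
        rw [CommSq.cone_fst] at h1; rw [CommSq.cone_snd] at h2
        have hlr : pullback.lift (s.fst ≫ pa) s.snd hscond ≫ r = s.fst ≫ pa :=
          pullback.lift_fst _ _ _
        have hlt' : pullback.lift (s.fst ≫ pa) s.snd hscond ≫ t = s.snd :=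
          pullback.lift_snd _ _ _
        apply hc.hom_ext
        · erw [hlr, ← h1, Category.assoc, hφa]; rfl
        · erw [hlt', h2]
    have hqfib : F.Fib q := by
      rw [← hφb]; exact F.fib_comp _ _ hφfib hpbfib
    -- lift the identity of b through q
    obtain ⟨s, hs⟩ := hb q hqfib hqweq (𝟙 b)
    refine ⟨s ≫ r, ?_, ?_⟩
    · -- f ≫ (s ≫ r) ∼ 𝟙 a
      have h1 : (f ≫ s) ≫ q = j ≫ q := by
        rw [Category.assoc, hs, Category.comp_id, hjq]
      have := PaperAux.key F ha q hqfib hqweq (f ≫ s) j h1 r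
      rw [hjr, Category.assoc] at this
      exact this
    · -- (s ≫ r) ≫ f ∼ 𝟙 b
      refine ⟨Pb, s ≫ t, ?_, ?_⟩
      · rw [Category.assoc, ← pullback.condition, ← Category.assoc]
      · rw [Category.assoc, ← hqdef, hs]
  · rintro ⟨g, ⟨Po1, H1, h10, h11⟩, ⟨Po2, H2, h20, h21⟩⟩
    have hH1 : F.Weq H1 :=
      PaperAux.weq_cancel_left F (by rw [h11]; exact F.weq_id a) (PaperAux.pathObject_π₁_weq F Po1)
    have hfg : F.Weq (f ≫ g) := by rw [← h10]; exact F.weq_comp _ _ hH1 (PaperAux.pathObject_π₀_weq F Po1)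
    have hH2 : F.Weq H2 :=
      PaperAux.weq_cancel_left F (by rw [h21]; exact F.weq_id b) (PaperAux.pathObject_π₁_weq F Po2)
    have hgf : F.Weq (g ≫ f) := by rw [← h20]; exact F.weq_comp _ _ hH2 (PaperAux.pathObject_π₀_weq F Po2)
    exact (F.two_out_of_six f g f hfg hgf).2.2.1
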